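/- For every integer n ≥ 2, the function h(x) = x/(1−(1−x)^n) has strictly positive second derivative at every x ∈ (0,1); in particular h is strictly convex on the open interval (0,1). (Consequently, the separable function g(x_1,…,x_n) = Σ_{i=1}^n x_i/(1−(1−x_i)^n) has strictly monotone partial derivatives, so at any interior critical point of g on the simplex all coordinates are equal.) -/

import Mathlib

open Set Finset

lemma key_pos (n : ℕ) (hn : 2 ≤ n) (u : ℝ) (hu0 : 0 < u) (hu1 : u < 1) :
    0 < ((n:ℝ) - 1) - ((n:ℝ)+1)*u + ((n:ℝ)+1)*u^n - ((n:ℝ)-1)*u^(n+1) := by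
  have hS : 0 < ∑ k ∈ Finset.Ico 1 n, (1 - u^k) * (1 - u^(n-k)) := by
    apply Finset.sum_pos
    · intro k hk
      simp only [Finset.mem_Ico] at hk
      have h1 : u ^ k < 1 := pow_lt_one₀ hu0.le hu1 (by omega)
      have h2 : u ^ (n-k) < 1 := pow_lt_one₀ hu0.le hu1 (by omega)
      nlinarith
    · exact ⟨1, by simp [Finset.mem_Ico]; omega⟩
  have hrefl : (∑ k ∈ Finset.Ico 1 n, u^(n-k)) = ∑ k ∈ Finset.Ico 1 n, u^k := by
    have := Finset.sum_Ico_reflect (fun j => u^j) 1 (m := n) (n := n) (by omega)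
    simpa using this
  have hSum : ∑ k ∈ Finset.Ico 1 n, (1 - u^k) * (1 - u^(n-k))
      = ((n:ℝ)-1)*(1+u^n) - 2 * ∑ k ∈ Finset.Ico 1 n, u^k := by
    have hterm : ∀ k ∈ Finset.Ico 1 n,
        (1 - u^k)*(1-u^(n-k)) = (1 + u^n) - u^k - u^(n-k) := by
      intro k hk
      simp only [Finset.mem_Ico] at hk
      have h : u^k * u^(n-k) = u^n := by rw [← pow_add]; congr 1; omega
      nlinarith [h]
    rw [Finset.sum_congr rfl hterm, Finset.sum_sub_distrib, Finset.sum_sub_distrib,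
      hrefl, Finset.sum_const, Nat.card_Ico, nsmul_eq_mul]
    have : ((n - 1 : ℕ) : ℝ) = (n:ℝ) - 1 := by
      push_cast [Nat.cast_sub (by omega : 1 ≤ n)]; ring
    rw [this]; ring
  have hT : (1 - u) * ∑ k ∈ Finset.Ico 1 n, u^k = u - u^n := by
    have hg := geom_sum_mul u n
    rw [Finset.sum_Ico_eq_sub (fun k => u^k) (show 1 ≤ n by omega)]
    simp only [Finset.range_one, Finset.sum_singleton, pow_zero]
    linear_combination -hg
  calc (0:ℝ) < (1 - u) * ∑ k ∈ Finset.Ico 1 n, (1 - u^k) * (1 - u^(n-k)) :=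
        mul_pos (by linarith) hS
    _ = ((n:ℝ) - 1) - ((n:ℝ)+1)*u + ((n:ℝ)+1)*u^n - ((n:ℝ)-1)*u^(n+1) := by
        rw [hSum]; linear_combination (-2:ℝ) * hT

/-- Lemma 3 (second-derivative computation): for `n ≥ 2`, the function
`h x = x / (1 - (1 - x)^n)` has strictly positive second derivative on `(0,1)`,
hence is strictly convex there. -/
theorem stmt_5 (n : ℕ) (hn : 2 ≤ n) :
    (∀ x ∈ Set.Ioo (0 : ℝ) 1,
        0 < iteratedDeriv 2 (fun x : ℝ => x / (1 - (1 - x) ^ n)) x) ∧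
    StrictConvexOn ℝ (Set.Ioo (0 : ℝ) 1) (fun x : ℝ => x / (1 - (1 - x) ^ n)) := by
  obtain ⟨m, rfl⟩ : ∃ m, n = m + 2 := ⟨n - 2, by omega⟩
  clear hn
  set f : ℝ → ℝ := fun x => x / (1 - (1 - x) ^ (m+2)) with hfdef
  have hDpos : ∀ x ∈ Ioo (0:ℝ) 1, 0 < 1 - (1-x)^(m+2) := by
    intro x hx
    have h1 : (1-x)^(m+2) < 1 :=
      pow_lt_one₀ (by linarith [hx.2]) (by linarith [hx.1]) (by omega)
    linarith
  have hone : ∀ x : ℝ, HasDerivAt (fun x : ℝ => 1 - x) (-1) x := fun x => by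
    simpa using (hasDerivAt_id x).const_sub 1
  have hDder : ∀ x : ℝ,
      HasDerivAt (fun x : ℝ => 1 - (1-x)^(m+2)) ((m+2) * (1-x)^(m+1)) x := by
    intro x
    have h3 := ((hone x).pow (m+2)).const_sub 1
    refine h3.congr_deriv ?_
    have : m + 2 - 1 = m + 1 := by omega
    rw [this]; push_cast; ring
  set g : ℝ → ℝ := fun x =>
      (1 - (1-x)^(m+2) - x * (((m:ℝ)+2) * (1-x)^(m+1))) / (1 - (1-x)^(m+2))^2 with hgdef
  have hderiv1 : ∀ x ∈ Ioo (0:ℝ) 1, deriv f x = g x := by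
    intro x hx
    have hne := (hDpos x hx).ne'
    have hd := (hasDerivAt_id x).div (hDder x) hne
    refine hd.deriv.trans ?_
    simp only [hgdef, id_eq, one_mul]
  -- second derivative formula
  have hmain : ∀ x ∈ Ioo (0:ℝ) 1, 0 < deriv (deriv f) x := by
    intro x hx
    have hne := (hDpos x hx).ne'
    -- derivative of g at x
    have hB : HasDerivAt (fun x : ℝ => (1-x)^(m+1)) (-((m+1) * (1-x)^m)) x := by
      have := (hone x).pow (m+1)
      refine this.congr_deriv ?_
      have : m + 1 - 1 = m := by omega
      rw [this]; push_cast; ring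
    have hC : HasDerivAt (fun x : ℝ => x * (((m:ℝ)+2) * (1-x)^(m+1)))
        (1 * (((m:ℝ)+2) * (1-x)^(m+1)) + x * (((m:ℝ)+2) * (-((m+1) * (1-x)^m)))) x :=
      (hasDerivAt_id x).mul (hB.const_mul ((m:ℝ)+2))
    have hA : HasDerivAt (fun x : ℝ => 1 - (1-x)^(m+2)) (((m:ℝ)+2) * (1-x)^(m+1)) x := by
      have := hDder x; push_cast at this; exact this
    have hN := hA.sub hC
    have hDen : HasDerivAt (fun x : ℝ => (1 - (1-x)^(m+2))^2)
        (2 * (1 - (1-x)^(m+2)) * (((m:ℝ)+2) * (1-x)^(m+1))) x := by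
      refine (hA.pow 2).congr_deriv ?_
      norm_num
    have hgd := hN.div hDen (pow_ne_zero 2 hne)
    -- positivity of the polynomial factor
    have hP : 0 < ((m:ℝ)+1) - ((m:ℝ)+3)*(1-x) + ((m:ℝ)+3)*(1-x)^(m+2)
        - ((m:ℝ)+1)*(1-x)^(m+3) := by
      have := key_pos (m+2) (by omega) (1-x) (by linarith [hx.2]) (by linarith [hx.1])
      push_cast at this
      convert this using 2 <;> ring_nf
    -- deriv g x equals nice closed form
    have hV : deriv g x = (((m:ℝ)+2) * (1-x)^m *
        (((m:ℝ)+1) - ((m:ℝ)+3)*(1-x) + ((m:ℝ)+3)*(1-x)^(m+2) - ((m:ℝ)+1)*(1-x)^(m+3)))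
        / (1 - (1-x)^(m+2))^3 := by
      refine hgd.deriv.trans ?_
      simp only [Pi.sub_apply]
      field_simp
      ring
    have hEq : deriv (deriv f) x = deriv g x := by
      have hev : deriv f =ᶠ[nhds x] g :=
        Filter.eventuallyEq_of_mem (isOpen_Ioo.mem_nhds hx) hderiv1
      exact hev.deriv_eq
    rw [hEq, hV]
    have hD3 : (0:ℝ) < (1 - (1-x)^(m+2))^3 := pow_pos (hDpos x hx) 3
    have hxm : (0:ℝ) < (1-x)^m := pow_pos (by linarith [hx.2]) m
    positivity
  constructor
  · intro x hx
    rw [iteratedDeriv_succ, iteratedDeriv_one]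
    exact hmain x hx
  · apply strictConvexOn_of_deriv2_pos (convex_Ioo 0 1)
    · apply ContinuousOn.div continuousOn_id
      · exact (Continuous.continuousOn (by continuity))
      · intro x hx; exact (hDpos x hx).ne'
    · intro x hx
      rw [interior_Ioo] at hx
      have : deriv^[2] f x = iteratedDeriv 2 f x := by rw [iteratedDeriv_eq_iterate]
      rw [this, iteratedDeriv_succ, iteratedDeriv_one]
      exact hmain x hx
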